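/- For all n ≥ 0, Σ_{i=0}^{n} Σ_{j=0}^{i} C(n,j) · C(n-j, n-i) · C(i,j) = Σ_{ℓ=0}^{n} C(n,ℓ) · C(2ℓ,ℓ). -/

import Mathlib

lemma sq_choose_sum (i : ℕ) :
    ∑ j ∈ Finset.range (i + 1), i.choose j * i.choose j = (2 * i).choose i := by
  have h := Nat.add_choose_eq i i i
  rw [Finset.Nat.sum_antidiagonal_eq_sum_range_succ_mk] at h
  rw [two_mul, h]
  apply Finset.sum_congr rfl
  intro j hj
  rw [Finset.mem_range] at hj
  exact congrArg (i.choose j * ·) (Nat.choose_symm_of_eq_add (by omega))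

theorem stmt_12 (n : ℕ) :
    ∑ i ∈ Finset.range (n + 1), ∑ j ∈ Finset.range (i + 1),
        n.choose j * (n - j).choose (n - i) * i.choose j =
      ∑ ℓ ∈ Finset.range (n + 1), n.choose ℓ * (2 * ℓ).choose ℓ := by
  apply Finset.sum_congr rfl
  intro i hi
  rw [Finset.mem_range] at hi
  have hi' : i ≤ n := by omega
  rw [← sq_choose_sum i, Finset.mul_sum]
  apply Finset.sum_congr rfl
  intro j hj
  rw [Finset.mem_range] at hj
  have hj' : j ≤ i := by omega
  have key : n.choose j * (n - j).choose (n - i) = n.choose i * i.choose j := by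
    have h1 := Nat.choose_mul (n := n) hj'
    have h2 : (n - j).choose (n - i) = (n - j).choose (i - j) :=
      Nat.choose_symm_of_eq_add (by omega)
    rw [h2, ← h1]
  rw [key]; ring
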